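/- Let λ be a real number with λ < −1 or λ > 1/3 (the zero-stability region). Then the quadratic factor q_λ has a complex root z with |z| ≥ 1/3, and every complex root of q_λ has modulus at most 1/3 if and only if λ = −9/5. Hence the maximum modulus of the non-unit roots of the ZeroSNet characteristic polynomial over the zero-stability region is minimized uniquely at λ = −9/5, with minimal value 1/3. -/

import Mathlib

/-- The quadratic factor of the ZeroSNet characteristic polynomial over ℂ (real parameter λ):
`q_λ(ρ) = ρ² + ((λ−3)/(4λ))ρ + (1+λ)/(4λ)`. -/
noncomputable def zerosQuadFactor (l : ℝ) (ρ : ℂ) : ℂ :=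
  ρ ^ 2 + (((l : ℂ) - 3) / (4 * (l : ℂ))) * ρ + (1 + (l : ℂ)) / (4 * (l : ℂ))

lemma quad_cast (l : ℝ) (z : ℂ) :
    zerosQuadFactor l z
      = z ^ 2 + (((l - 3) / (4 * l) : ℝ) : ℂ) * z + (((1 + l) / (4 * l) : ℝ) : ℂ) := by
  unfold zerosQuadFactor; push_cast; ring

lemma key (l : ℝ) (hl : l < -1 ∨ 1 / 3 < l) (hne : l ≠ -9/5) :
    ∃ z : ℂ, zerosQuadFactor l z = 0 ∧ 1 / 3 < ‖z‖ := by
  have hl0 : l ≠ 0 := by rcases hl with h | h <;> intro h0 <;> rw [h0] at h <;> norm_num at h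
  set b : ℝ := (l - 3) / (4 * l) with hb
  set c : ℝ := (1 + l) / (4 * l) with hc
  have h1 : 4 * c - b ^ 2 = (15*l^2 + 22*l - 9) / (16*l^2) := by
    rw [hb, hc]; field_simp; ring
  have h2 : c - 1/9 = (5*l + 9) / (36*l) := by
    rw [hc]; field_simp; ring
  have h3 : 1/9 - b/3 + c = (10*l + 18) / (36*l) := by
    rw [hb, hc]; field_simp; ring
  by_cases hD : 0 < 4 * c - b ^ 2
  · -- complex-conjugate roots of modulus √c > 1/3
    have hP : 0 < 15*l^2 + 22*l - 9 := by
      have h16 : (0:ℝ) < 16*l^2 := by positivity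
      have := mul_pos hD h16
      rw [h1, div_mul_cancel₀ _ (ne_of_gt h16)] at this
      exact this
    have hc9 : 1/9 < c := by
      rcases hl with h | h
      · have hl95 : l < -9/5 := by nlinarith
        have : 0 < (5*l + 9) / (36*l) := div_pos_of_neg_of_neg (by linarith) (by linarith)
        linarith [h2 ▸ this]
      · have : 0 < (5*l + 9) / (36*l) := div_pos (by linarith) (by linarith)
        linarith [h2 ▸ this]
    set v : ℝ := Real.sqrt (4*c - b^2) / 2 with hv
    have hv2 : v ^ 2 = (4*c - b^2) / 4 := by
      rw [hv, div_pow, Real.sq_sqrt hD.le]; norm_num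
    refine ⟨(-b/2 : ℝ) + (v : ℝ) * Complex.I, ?_, ?_⟩
    · rw [quad_cast, ← hb, ← hc]
      have : ((-b/2 : ℝ) + (v:ℝ) * Complex.I) ^ 2 + (b:ℂ) * ((-b/2 : ℝ) + (v:ℝ) * Complex.I) + (c:ℂ)
          = ((c - b^2/4 - v^2 : ℝ) : ℂ) := by
        push_cast
        linear_combination ((v:ℂ)^2) * Complex.I_sq
      rw [this]
      have : c - b^2/4 - v^2 = 0 := by rw [hv2]; ring
      rw [this, Complex.ofReal_zero]
    · rw [Complex.norm_add_mul_I]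
      have habs : Real.sqrt ((-b/2)^2 + v^2) = Real.sqrt c := by
        congr 1
        rw [hv2]; ring
      rw [habs]
      have : Real.sqrt (1/9) < Real.sqrt c := Real.sqrt_lt_sqrt (by norm_num) hc9
      rwa [show (1/9 : ℝ) = (1/3)^2 by norm_num, Real.sqrt_sq (by norm_num)] at this
  · -- real roots; region forces -9/5 < l < -1
    push_neg at hD
    have hl1 : l < -1 := by
      rcases hl with h | h
      · exact h
      · exfalso
        have : 0 < (15*l^2 + 22*l - 9) / (16*l^2) := by
          apply div_pos (by nlinarith) (by positivity)
        rw [← h1] at this; linarith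
    have hP : 15*l^2 + 22*l - 9 ≤ 0 := by
      have h16 : (0:ℝ) < 16*l^2 := by positivity
      have := mul_nonpos_of_nonpos_of_nonneg (by linarith [h1 ▸ hD] : (15*l^2+22*l-9)/(16*l^2) ≤ 0) h16.le
      rw [div_mul_cancel₀ _ (ne_of_gt h16)] at this
      exact this
    have hl95 : -9/5 < l := by
      rcases lt_or_eq_of_le (show -9/5 ≤ l by nlinarith) with h | h
      · exact h
      · exact absurd h.symm hne
    -- q(-1/3) < 0
    have hq13 : 1/9 - b/3 + c < 0 := by
      rw [h3]
      exact div_neg_of_pos_of_neg (by linarith) (by linarith)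
    set t : ℝ := Real.sqrt (b^2 - 4*c) with ht
    have ht0 : 0 ≤ t := Real.sqrt_nonneg _
    have ht2 : t ^ 2 = b^2 - 4*c := Real.sq_sqrt (by linarith)
    set x : ℝ := (-b - t) / 2 with hx
    have hroot : x^2 + b*x + c = 0 := by
      rw [hx]; linear_combination (1/4 : ℝ) * ht2
    have hxlt : x < -1/3 := by
      have hdiff : t^2 - (2/3 - b)^2 = -4*(1/9 - b/3 + c) := by rw [ht2]; ring
      have hgt : (2/3 - b)^2 < t^2 := by linarith
      have htb : 2/3 - b < t := lt_of_pow_lt_pow_left₀ 2 ht0 hgt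
      rw [hx]; linarith
    refine ⟨(x : ℂ), ?_, ?_⟩
    · rw [quad_cast, ← hb, ← hc]
      exact_mod_cast congrArg (Complex.ofReal) hroot
    · rw [Complex.norm_real, Real.norm_eq_abs, abs_of_neg (by linarith : x < 0)]
      linarith

/-- Over the zero-stability region (`λ < −1` or `λ > 1/3`), the quadratic factor `q_λ`
always has a complex root of modulus at least `1/3`, and all its complex roots have modulus
at most `1/3` precisely when `λ = −9/5`: the maximum modulus of the non-unit roots of the
ZeroSNet characteristic polynomial is minimized uniquely at `λ = −9/5`, with value `1/3`. -/
theorem zerosnet_optimal_lambda (l : ℝ) (hl : l < -1 ∨ 1 / 3 < l) :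
    (∃ z : ℂ, zerosQuadFactor l z = 0 ∧ 1 / 3 ≤ ‖z‖) ∧
    ((∀ z : ℂ, zerosQuadFactor l z = 0 → ‖z‖ ≤ 1 / 3) ↔ l = -9 / 5) := by
  have hquad95 : ∀ z : ℂ, zerosQuadFactor (-9/5) z = (z + 1/3)^2 := by
    intro z
    unfold zerosQuadFactor
    push_cast
    ring_nf
  constructor
  · by_cases hne : l = -9/5
    · subst hne
      refine ⟨-1/3, ?_, ?_⟩
      · rw [hquad95]; norm_num
      · rw [show (-1/3 : ℂ) = ((-1/3 : ℝ) : ℂ) by push_cast; ring, Complex.norm_real, Real.norm_eq_abs]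
        rw [abs_of_nonpos (by norm_num)]; norm_num
    · obtain ⟨z, hz, hz'⟩ := key l hl (by exact_mod_cast hne)
      exact ⟨z, hz, hz'.le⟩
  · constructor
    · intro H
      by_contra hne
      obtain ⟨z, hz, hz'⟩ := key l hl (by exact_mod_cast hne)
      exact absurd (H z hz) (not_le.2 hz')
    · intro hl9
      subst hl9
      intro z hz
      rw [hquad95] at hz
      have : z + 1/3 = 0 := by
        have := sq_eq_zero_iff.mp hz
        exact this
      have hz3 : z = -1/3 := by linear_combination this
      rw [hz3, show (-1/3 : ℂ) = ((-1/3 : ℝ) : ℂ) by push_cast; ring, Complex.norm_real, Real.norm_eq_abs]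
      rw [abs_of_nonpos (by norm_num)]; norm_num
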